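/- Let α be an integer with 11 ≤ α ≤ 50, let n = 2^r for some integer r with n > α, and let a_0,…,a_n be integers with |a_0·a_n| = 1. Then ψ_n^{(α)}(x; a_0,…,a_n) is irreducible over ℚ. -/

import Mathlib

open Polynomial Finset

/-- ψ_n^{(α)}(x; a_0,…,a_n) = Σ_{j=0}^n a_j·C(n,j)·(α+n)(α+n−1)⋯(α+j+1)·x^j,
regarded as a polynomial over ℚ. -/
noncomputable def psiInt (n : ℕ) (α : ℤ) (a : ℕ → ℤ) : Polynomial ℚ :=
  ∑ j ∈ Finset.range (n + 1),
    Polynomial.C (((a j * (n.choose j : ℤ) * ∏ i ∈ Finset.Icc (j + 1) n, (α + i) : ℤ)) : ℚ) *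
      Polynomial.X ^ j

namespace Psi13Aux

lemma coeff_sum_C_mul_X_pow {R : Type*} [Semiring R] (d : ℕ → R) (n k : ℕ) :
    (∑ j ∈ Finset.range (n + 1), Polynomial.C (d j) * Polynomial.X ^ j).coeff k
      = if k ≤ n then d k else 0 := by
  rw [Polynomial.finset_sum_coeff]
  simp only [Polynomial.coeff_C_mul, Polynomial.coeff_X_pow, mul_ite, mul_one, mul_zero]
  rw [Finset.sum_ite_eq (Finset.range (n + 1)) k d]
  simp [Nat.lt_succ_iff]

lemma natDegree_sum_C_mul_X_pow {R : Type*} [Semiring R] (d : ℕ → R) (n : ℕ) (hd : d n ≠ 0) :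
    (∑ j ∈ Finset.range (n + 1), Polynomial.C (d j) * Polynomial.X ^ j).natDegree = n := by
  apply le_antisymm
  · apply Polynomial.natDegree_le_iff_coeff_eq_zero.mpr
    intro m hm
    rw [coeff_sum_C_mul_X_pow]
    simp [Nat.not_le.mpr hm]
  · apply Polynomial.le_natDegree_of_ne_zero
    rw [coeff_sum_C_mul_X_pow]
    simpa using hd

lemma irreducible_of_irreducible_reverse {K : Type*} [Field K] {p : K[X]}
    (h0 : p.coeff 0 ≠ 0) (h : Irreducible p.reverse) : Irreducible p := by
  have hp0 : p ≠ 0 := fun hp => h0 (by simp [hp])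
  have key : ∀ w z : K[X], p = w * z → IsUnit w.reverse → IsUnit w := by
    intro w z hwz hu
    have hw0 : w.coeff 0 ≠ 0 := by
      intro hw
      apply h0
      rw [hwz, Polynomial.mul_coeff_zero, hw, zero_mul]
    have htd : w.natTrailingDegree = 0 :=
      Polynomial.natTrailingDegree_eq_zero.mpr (Or.inr hw0)
    have hdeg : w.reverse.natDegree = 0 := Polynomial.natDegree_eq_zero_of_isUnit hu
    rw [Polynomial.reverse_natDegree, htd, Nat.sub_zero] at hdeg
    rw [Polynomial.eq_C_of_natDegree_eq_zero hdeg]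
    rw [Polynomial.eq_C_of_natDegree_eq_zero hdeg, Polynomial.coeff_C] at hw0
    simp only [if_pos rfl] at hw0
    exact (Polynomial.isUnit_C).mpr (isUnit_iff_ne_zero.mpr hw0)
  constructor
  · intro hu
    have hdeg : p.natDegree = 0 := Polynomial.natDegree_eq_zero_of_isUnit hu
    have : p.reverse = p := by
      conv_lhs => rw [Polynomial.eq_C_of_natDegree_eq_zero hdeg]
      rw [Polynomial.reverse, Polynomial.eq_C_of_natDegree_eq_zero hdeg]
      simp [Polynomial.reflect_C]
    exact h.not_isUnit (by rw [this]; exact hu)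
  · intro u v huv
    have hrev : p.reverse = u.reverse * v.reverse := by
      rw [huv, Polynomial.reverse_mul_of_domain]
    rcases h.isUnit_or_isUnit hrev with hu | hv
    · exact Or.inl (key u v huv hu)
    · exact Or.inr (key v u (by rw [huv, mul_comm]) hv)

lemma emult_eq_factorization {x : ℕ} (hx : x ≠ 0) :
    emultiplicity 2 x = ((x.factorization 2 : ℕ) : ℕ∞) := by
  rw [(Nat.finiteMultiplicity_iff.mpr ⟨by norm_num, Nat.pos_of_ne_zero hx⟩).emultiplicity_eq_multiplicity,
    Nat.multiplicity_eq_factorization Nat.prime_two hx]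

lemma factorization_two_pow_factorial (r : ℕ) :
    (Nat.factorial (2 ^ r)).factorization 2 = 2 ^ r - 1 := by
  induction r with
  | zero => simp
  | succ r ih =>
    have h := Nat.Prime.emultiplicity_factorial_mul (n := 2 ^ r) Nat.prime_two
    rw [← pow_succ'] at h
    rw [emult_eq_factorization (Nat.factorial_ne_zero _),
      emult_eq_factorization (Nat.factorial_ne_zero _), ih] at h
    have h' : (Nat.factorial (2 ^ (r + 1))).factorization 2 = (2 ^ r - 1) + 2 ^ r := by
      exact_mod_cast h
    rw [h']
    have : 1 ≤ 2 ^ r := Nat.one_le_two_pow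
    omega

lemma factorization_factorial_lt (k : ℕ) (hk : k ≠ 0) : (Nat.factorial k).factorization 2 < k := by
  have h := Nat.emultiplicity_two_factorial_lt hk
  rw [emult_eq_factorization (Nat.factorial_ne_zero _)] at h
  exact_mod_cast h

lemma choose_odd {A r : ℕ} (hA : A < 2 ^ r) : ¬ 2 ∣ (A + 2 ^ r).choose (2 ^ r) := by
  have hlog : Nat.log 2 (A + 2 ^ r) < r + 2 := by
    apply Nat.log_lt_of_lt_pow (by positivity)
    calc A + 2 ^ r < 2 ^ r + 2 ^ r := by omega
    _ = 2 ^ (r + 1) := by ring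
    _ ≤ 2 ^ (r + 2) := Nat.pow_le_pow_right (by norm_num) (by omega)
  have h := Nat.Prime.emultiplicity_choose' (p := 2) (n := A) (k := 2 ^ r) (b := r + 2)
    Nat.prime_two hlog
  rw [← emultiplicity_eq_zero]
  rw [h]
  norm_cast
  rw [Finset.card_eq_zero, Finset.filter_eq_empty_iff]
  intro i hi
  simp only [Finset.mem_Ico] at hi
  rw [not_le]
  have hpos : 0 < 2 ^ i := by positivity
  rcases le_or_gt i r with hir | hir
  · have h1 : 2 ^ r % 2 ^ i = 0 := Nat.mod_eq_zero_of_dvd (pow_dvd_pow 2 hir)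
    have h2 : A % 2 ^ i < 2 ^ i := Nat.mod_lt _ hpos
    omega
  · have hlt : 2 ^ r < 2 ^ i := Nat.pow_lt_pow_right one_lt_two hir
    have e1 : 2 ^ r % 2 ^ i = 2 ^ r := Nat.mod_eq_of_lt hlt
    have e2 : A % 2 ^ i = A := Nat.mod_eq_of_lt (lt_trans hA hlt)
    have h3 : 2 ^ (r + 1) ≤ 2 ^ i := Nat.pow_le_pow_right (by norm_num) hir
    have h4 : 2 ^ (r + 1) = 2 * 2 ^ r := by ring
    omega

lemma prod_Icc_eq_ascFactorial (A j m : ℕ) :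
    ∏ i ∈ Finset.Icc (j + 1) (j + m), (A + i) = (A + j + 1).ascFactorial m := by
  induction m with
  | zero => simp
  | succ m ih =>
    rw [← Nat.add_assoc, Finset.prod_Icc_succ_top (by omega), ih, Nat.ascFactorial_succ]
    ring

end Psi13Aux

theorem stmt_13 (α : ℤ) (hα1 : 11 ≤ α) (hα2 : α ≤ 50) (n : ℕ) (r : ℕ)
    (hnr : n = 2 ^ r) (hnα : α < (n : ℤ)) (a : ℕ → ℤ) (ha : |a 0 * a n| = 1) :
    Irreducible (psiInt n α a) := by
  have h2 : Nat.Prime 2 := Nat.prime_two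
  obtain ⟨A, rfl⟩ : ∃ A : ℕ, (A : ℤ) = α := ⟨α.toNat, Int.toNat_of_nonneg (by omega)⟩
  have hAn : A < n := by exact_mod_cast hnα
  have hA11 : 11 ≤ A := by exact_mod_cast hα1
  have hn1 : 1 ≤ n := by omega
  -- the endpoint coefficients are units
  have hu : IsUnit (a 0) ∧ IsUnit (a n) := by
    have haa : a 0 * a n = 1 ∨ a 0 * a n = -1 := (abs_eq (by norm_num : (0:ℤ) ≤ 1)).mp ha
    have : IsUnit (a 0 * a n) := Int.isUnit_iff.mpr haa
    exact ⟨isUnit_of_mul_isUnit_left this, isUnit_of_mul_isUnit_right this⟩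
  have ha0 : a 0 = 1 ∨ a 0 = -1 := Int.isUnit_iff.mp hu.1
  have han : a n = 1 ∨ a n = -1 := Int.isUnit_iff.mp hu.2
  set D : ℕ → ℕ := fun k => n.descFactorial k * (A + n).choose k with hD
  have hdfne : ∀ k, k ≤ n → n.descFactorial k ≠ 0 := by
    intro k hk h
    exact absurd (Nat.descFactorial_eq_zero_iff_lt.mp h) (by omega)
  have hDne : ∀ k, k ≤ n → D k ≠ 0 := by
    intro k hk
    exact Nat.mul_ne_zero (hdfne k hk) (Nat.choose_pos (by omega)).ne'
  have hfact : (Nat.factorial n).factorization 2 = n - 1 := by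
    subst hnr; exact Psi13Aux.factorization_two_pow_factorial r
  have hchodd : ¬ 2 ∣ (A + n).choose n := by
    subst hnr; exact Psi13Aux.choose_odd hAn
  have hdesc : ∀ k, 1 ≤ k → k < n → 2 ^ k ∣ n.descFactorial k := by
    intro k h1k hkn
    have hmul : Nat.factorial (n - k) * n.descFactorial k = Nat.factorial n :=
      Nat.factorial_mul_descFactorial hkn.le
    have hν : (Nat.factorial (n - k)).factorization 2 + (n.descFactorial k).factorization 2
        = (Nat.factorial n).factorization 2 := by
      rw [← Finsupp.add_apply, ← Nat.factorization_mul (Nat.factorial_ne_zero _)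
        (hdfne k hkn.le), hmul]
    have hlt : (Nat.factorial (n - k)).factorization 2 < n - k :=
      Psi13Aux.factorization_factorial_lt _ (by omega)
    apply (Nat.Prime.pow_dvd_iff_le_factorization h2 (hdfne k hkn.le)).mpr
    omega
  have hDnself : D n = Nat.factorial n * (A + n).choose n := by
    simp only [hD, Nat.descFactorial_self]
  have hν2Dn : (2 * D n).factorization 2 = n := by
    have hch : ((A + n).choose n).factorization 2 = 0 :=
      Nat.factorization_eq_zero_of_not_dvd hchodd
    have hne1 : Nat.factorial n ≠ 0 := Nat.factorial_ne_zero n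
    have hne2 : (A + n).choose n ≠ 0 := (Nat.choose_pos (by omega)).ne'
    rw [hDnself, Nat.factorization_mul (by norm_num) (Nat.mul_ne_zero hne1 hne2),
      Finsupp.add_apply, Nat.factorization_mul hne1 hne2, Finsupp.add_apply, hfact, hch,
      Nat.Prime.factorization_self h2]
    omega
  have h2Dn_ne : 2 * D n ≠ 0 := by
    have := hDne n le_rfl; positivity
  have hdvd : ∀ k, k ≤ n → 2 ^ k ∣ 2 * D k := by
    intro k hk
    rcases Nat.eq_zero_or_pos k with rfl | h1k
    · simp
    rcases lt_or_eq_of_le hk with hkn | rfl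
    · exact dvd_mul_of_dvd_right (dvd_mul_of_dvd_left (hdesc k h1k hkn) _) 2
    · exact (Nat.Prime.pow_dvd_iff_le_factorization h2 h2Dn_ne).mpr (by omega)
  have hQodd : ¬ 2 ∣ (2 * D n / 2 ^ n) := by
    intro hdd
    have hq : (2 * D n / 2 ^ n) * 2 ^ n = 2 * D n := Nat.div_mul_cancel (hdvd n le_rfl)
    have hdd2 : 2 ^ (n + 1) ∣ 2 * D n := by
      calc 2 ^ (n + 1) = 2 * 2 ^ n := by ring
      _ ∣ (2 * D n / 2 ^ n) * 2 ^ n := mul_dvd_mul hdd (dvd_refl _)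
      _ = 2 * D n := hq
    have := (Nat.Prime.pow_dvd_iff_le_factorization h2 h2Dn_ne).mp hdd2
    omega
  -- coefficient identity
  have hcoeff : ∀ j, j ≤ n →
      (a j * (n.choose j : ℤ) * ∏ i ∈ Finset.Icc (j + 1) n, ((A : ℤ) + i))
        = a j * (D (n - j) : ℤ) := by
    intro j hj
    have hprod : (∏ i ∈ Finset.Icc (j + 1) n, ((A : ℤ) + i))
        = ((∏ i ∈ Finset.Icc (j + 1) n, (A + i) : ℕ) : ℤ) := by
      push_cast
      rfl
    have hnat : (∏ i ∈ Finset.Icc (j + 1) n, (A + i)) = (A + j + 1).ascFactorial (n - j) := by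
      have h := Psi13Aux.prod_Icc_eq_ascFactorial A j (n - j)
      rwa [Nat.add_sub_cancel' hj] at h
    have hasc : (A + j + 1).ascFactorial (n - j)
        = Nat.factorial (n - j) * (A + n).choose (n - j) := by
      rw [Nat.ascFactorial_eq_factorial_mul_choose]
      congr 2
      omega
    have hdesc2 : n.descFactorial (n - j) = Nat.factorial (n - j) * n.choose j := by
      rw [Nat.descFactorial_eq_factorial_mul_choose, Nat.choose_symm hj]
    rw [hprod, hnat, hasc]
    simp only [hD]
    rw [hdesc2]
    push_cast
    ring
  set b : ℕ → ℤ := fun k => a (n - k) * ((2 * D k / 2 ^ k : ℕ) : ℤ) with hb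
  set Q : Polynomial ℤ := ∑ k ∈ Finset.range (n + 1), Polynomial.C (b k) * Polynomial.X ^ k
    with hQ
  have hQcoeff : ∀ k, Q.coeff k = if k ≤ n then b k else 0 := fun k =>
    Psi13Aux.coeff_sum_C_mul_X_pow b n k
  have hb0 : b 0 = a n * 2 := by
    simp only [hb, hD, Nat.sub_zero, Nat.descFactorial_zero, Nat.choose_zero_right, pow_zero]
    norm_num
  have hbn_odd : ¬ (2:ℤ) ∣ b n := by
    simp only [hb, Nat.sub_self]
    intro hdd
    have hq2 : (2:ℤ) ∣ ((2 * D n / 2 ^ n : ℕ) : ℤ) := by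
      rcases ha0 with h | h <;> rw [h] at hdd
      · rwa [one_mul] at hdd
      · rwa [neg_one_mul, dvd_neg] at hdd
    exact hQodd (by exact_mod_cast hq2)
  have hbn_ne : b n ≠ 0 := fun h => hbn_odd (h ▸ dvd_zero 2)
  have hQdeg : Q.natDegree = n := Psi13Aux.natDegree_sum_C_mul_X_pow b n hbn_ne
  have hQne : Q ≠ 0 := fun h => by
    have := hQcoeff n
    rw [h, Polynomial.coeff_zero, if_pos le_rfl] at this
    exact hbn_ne this.symm
  have hQdegree : Q.degree = (n : ℕ) := by
    rw [Polynomial.degree_eq_natDegree hQne, hQdeg]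
  have hQprim : Q.IsPrimitive := by
    intro s hs
    have hdvd0 : s ∣ Q.coeff 0 := (Polynomial.C_dvd_iff_dvd_coeff s Q).mp hs 0
    have hdvdn : s ∣ Q.coeff n := (Polynomial.C_dvd_iff_dvd_coeff s Q).mp hs n
    rw [hQcoeff 0, if_pos (Nat.zero_le n), hb0] at hdvd0
    rw [hQcoeff n, if_pos le_rfl] at hdvdn
    have hs2 : s ∣ 2 := by
      rcases han with h | h <;> rw [h] at hdvd0 <;>
        first
          | exact hdvd0
          | rwa [one_mul] at hdvd0
          | exact dvd_neg.mp hdvd0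
          | (rw [neg_one_mul] at hdvd0; exact dvd_neg.mp hdvd0)
    have hnat : s.natAbs ∣ 2 := by
      have := Int.natAbs_dvd_natAbs.mpr hs2
      simpa using this
    rcases (Nat.dvd_prime h2).mp hnat with h1 | hh2
    · exact Int.isUnit_iff_natAbs_eq.mpr h1
    · exfalso
      apply hbn_odd
      refine dvd_trans ?_ hdvdn
      rcases Int.natAbs_eq s with h | h <;> rw [h, hh2] <;> norm_num
  have hPprime : (Ideal.span {(2:ℤ)}).IsPrime := by
    rw [Ideal.span_singleton_prime (by norm_num)]
    exact Int.prime_two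
  have hQirr : Irreducible Q := by
    apply Polynomial.irreducible_of_eisenstein_criterion hPprime
    · rw [Polynomial.leadingCoeff, hQdeg, Ideal.mem_span_singleton, hQcoeff n, if_pos le_rfl]
      exact hbn_odd
    · intro m hm
      rw [hQdegree] at hm
      have hmn : m < n := by exact_mod_cast hm
      rw [hQcoeff m, if_pos hmn.le, Ideal.mem_span_singleton]
      rcases Nat.eq_zero_or_pos m with rfl | h1m
      · rw [hb0]
        exact Dvd.intro_left _ rfl
      · have hdd : 2 ∣ (2 * D m / 2 ^ m) := by
          rw [Nat.dvd_div_iff_mul_dvd (hdvd m hmn.le), mul_comm]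
          exact mul_dvd_mul_left 2 (dvd_mul_of_dvd_left (hdesc m h1m hmn) _)
        simp only [hb]
        exact Dvd.dvd.mul_left (by exact_mod_cast hdd) _
    · rw [hQdegree]
      exact_mod_cast (by omega : 0 < n)
    · rw [Ideal.span_singleton_pow, Ideal.mem_span_singleton, hQcoeff 0,
        if_pos (Nat.zero_le n), hb0]
      rcases han with h | h <;> rw [h] <;> norm_num
    · exact hQprim
  have hQmapirr : Irreducible (Q.map (algebraMap ℤ ℚ)) :=
    (Polynomial.IsPrimitive.irreducible_iff_irreducible_map_fraction_map hQprim).mp hQirr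
  -- move to ℚ
  letI : Invertible (2:ℚ) := invertibleOfNonzero two_ne_zero
  set e := Polynomial.algEquivCMulXAddC (2:ℚ) 0 with he
  apply (MulEquiv.irreducible_iff e).mp
  set S : Polynomial ℚ := ∑ j ∈ Finset.range (n + 1),
      Polynomial.C (((a j * (D (n - j) : ℤ) : ℤ) : ℚ) * 2 ^ j) * Polynomial.X ^ j with hS
  have heS : e (psiInt n (A : ℤ) a) = S := by
    rw [psiInt, map_sum]
    apply Finset.sum_congr rfl
    intro j hj
    rw [Finset.mem_range, Nat.lt_succ_iff] at hj
    rw [map_mul, map_pow, hcoeff j hj]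
    have hX : e Polynomial.X = Polynomial.C (2:ℚ) * Polynomial.X + Polynomial.C 0 := by
      simp [he, Polynomial.algEquivCMulXAddC, Polynomial.algEquivOfCompEqX]
    have hC : e (Polynomial.C (((a j * (D (n - j) : ℤ) : ℤ) : ℚ))) =
        Polynomial.C (((a j * (D (n - j) : ℤ) : ℤ) : ℚ)) := by
      simp [he, Polynomial.algEquivCMulXAddC, Polynomial.algEquivOfCompEqX]
    rw [hX, hC, map_zero, add_zero, mul_pow, ← Polynomial.C_pow, ← mul_assoc, ← Polynomial.C_mul]
  rw [heS]
  have hSn : (((a n * (D (n - n) : ℤ) : ℤ) : ℚ) * 2 ^ n) ≠ 0 := by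
    simp only [Nat.sub_self, hD, Nat.descFactorial_zero, Nat.choose_zero_right]
    have : a n ≠ 0 := hu.2.ne_zero
    push_cast
    positivity
  have hSdeg : S.natDegree = n := by
    rw [hS]
    exact Psi13Aux.natDegree_sum_C_mul_X_pow _ n hSn
  have hkey : Polynomial.reflect n S
      = Polynomial.C ((2:ℚ) ^ (n - 1)) * (Q.map (algebraMap ℤ ℚ)) := by
    ext k
    rw [Polynomial.coeff_reflect, Polynomial.coeff_C_mul, Polynomial.coeff_map]
    rcases le_or_gt k n with hk | hk
    · rw [Polynomial.revAt_le hk, hS, Psi13Aux.coeff_sum_C_mul_X_pow, if_pos (Nat.sub_le n k),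
        hQcoeff k, if_pos hk]
      simp only [algebraMap_int_eq, eq_intCast]
      have hnk : n - (n - k) = k := by omega
      rw [hnk]
      have hbk : (b k) * 2 ^ k = a (n - k) * (2 * (D k : ℤ)) := by
        simp only [hb]
        rw [mul_assoc]
        congr 1
        have hh := congrArg (fun m : ℕ => (m : ℤ)) (Nat.div_mul_cancel (hdvd k hk))
        push_cast at hh ⊢
        linarith [hh]
      have hcast : ((b k : ℤ) : ℚ) * 2 ^ k = (a (n - k) : ℚ) * (2 * (D k : ℚ)) := by
        exact_mod_cast congrArg (fun z : ℤ => (z : ℚ)) hbk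
      have h2k : ((2:ℚ)) ^ k ≠ 0 := by positivity
      apply mul_right_cancel₀ h2k
      have hpow1 : (2:ℚ) ^ (n - k) * 2 ^ k = 2 ^ n := by
        rw [← pow_add, Nat.sub_add_cancel hk]
      have hpow2 : (2:ℚ) ^ (n - 1) * 2 = 2 ^ n := by
        rw [← pow_succ, Nat.sub_add_cancel hn1]
      push_cast
      linear_combination (-(2:ℚ) ^ (n - 1)) * hcast
        + ((a (n - k) : ℚ) * (D k : ℚ)) * hpow1 - ((a (n - k) : ℚ) * (D k : ℚ)) * hpow2
    · rw [Polynomial.revAt_eq_self_of_lt hk, hS, Psi13Aux.coeff_sum_C_mul_X_pow,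
        if_neg (by omega), hQcoeff k, if_neg (by omega)]
      simp
  have hrev : S.reverse = Polynomial.C ((2:ℚ) ^ (n - 1)) * (Q.map (algebraMap ℤ ℚ)) := by
    rw [Polynomial.reverse, hSdeg, hkey]
  apply Psi13Aux.irreducible_of_irreducible_reverse
  · rw [hS, Psi13Aux.coeff_sum_C_mul_X_pow, if_pos (Nat.zero_le n)]
    simp only [pow_zero, mul_one, Nat.sub_zero]
    rw [Int.cast_ne_zero]
    exact mul_ne_zero hu.1.ne_zero (by exact_mod_cast hDne n le_rfl)
  · rw [hrev, irreducible_isUnit_mul (Polynomial.isUnit_C.mpr (isUnit_iff_ne_zero.mpr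
      (by positivity : ((2:ℚ) ^ (n - 1)) ≠ 0)))]
    exact hQmapirr
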